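/- Every real number a with 0 ≤ a < 1 is an adherent point of the set of all ratios o(G)/o(H), where G ranges over all finite nilpotent groups and H ranges over all subgroups of G. That is, for every a ∈ [0, 1) and every ε > 0, there exist a finite nilpotent group G and a subgroup H of G such that |o(G)/o(H) - a| < ε. -/

import Mathlib

open Filter Topology

/-- The average order of the elements of a finite group `G`:
`o(G) = (1/|G|) * ∑_{x ∈ G} |x|`. -/
noncomputable def avgOrder (G : Type*) [Group G] : ℝ :=
  (∑ᶠ x : G, (orderOf x : ℝ)) / (Nat.card G)

section Basic

variable {G : Type*} [Group G]

lemma avgOrder_eq_sum [Fintype G] :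
    avgOrder G = (∑ x : G, (orderOf x : ℝ)) / (Fintype.card G) := by
  rw [avgOrder, finsum_eq_sum_of_fintype, Nat.card_eq_fintype_card]

lemma avgOrder_pos [Finite G] : 0 < avgOrder G := by
  have : Fintype G := Fintype.ofFinite G
  rw [avgOrder_eq_sum]
  apply div_pos
  · have : ∀ x : G, (1:ℝ) ≤ (orderOf x : ℝ) := fun x => by
      exact_mod_cast Nat.one_le_iff_ne_zero.2 (orderOf_pos x).ne'
    calc (0:ℝ) < Fintype.card G := by positivity
    _ = ∑ _x : G, (1:ℝ) := by simp
    _ ≤ _ := Finset.sum_le_sum fun x _ => this x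
  · positivity

lemma avgOrder_congr {H : Type*} [Group H] [Finite G] (e : G ≃* H) :
    avgOrder G = avgOrder H := by
  have : Fintype G := Fintype.ofFinite G
  have : Fintype H := Fintype.ofEquiv G e.toEquiv
  rw [avgOrder_eq_sum, avgOrder_eq_sum]
  congr 1
  · rw [← Equiv.sum_comp e.toEquiv]
    refine Finset.sum_congr rfl fun x _ => ?_
    have := orderOf_injective e.toMonoidHom e.injective x
    simp only [MulEquiv.coe_toMonoidHom] at this
    rw [show e.toEquiv x = e x from rfl, this]
  · exact_mod_cast Fintype.card_congr e.toEquiv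

lemma avgOrder_of_subsingleton [Subsingleton G] : avgOrder G = 1 := by
  have : Fintype G := Fintype.ofFinite G
  rw [avgOrder_eq_sum]
  have h1 : Fintype.card G = 1 := Fintype.card_eq_one_iff.2 ⟨1, fun y => Subsingleton.elim _ _⟩
  rw [Fintype.sum_eq_single (1 : G) (fun y hy => absurd (Subsingleton.elim y 1) hy)]
  simp [h1]

lemma avgOrder_prod {A B : Type*} [Group A] [Group B] [Finite A] [Finite B]
    (h : Nat.Coprime (Nat.card A) (Nat.card B)) :
    avgOrder (A × B) = avgOrder A * avgOrder B := by
  have : Fintype A := Fintype.ofFinite A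
  have : Fintype B := Fintype.ofFinite B
  rw [avgOrder_eq_sum, avgOrder_eq_sum, avgOrder_eq_sum]
  have key : ∀ x : A × B, (orderOf x : ℝ) = (orderOf x.1 : ℝ) * (orderOf x.2 : ℝ) := by
    intro x
    have hc : Nat.Coprime (orderOf x.1) (orderOf x.2) :=
      Nat.Coprime.coprime_dvd_left (orderOf_dvd_natCard x.1)
        (Nat.Coprime.coprime_dvd_right (orderOf_dvd_natCard x.2) h)
    rw [Prod.orderOf, Nat.Coprime.lcm_eq_mul hc]
    push_cast; ring
  calc (∑ x : A × B, (orderOf x : ℝ)) / (Fintype.card (A × B))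
      = (∑ a : A, ∑ b : B, (orderOf a : ℝ) * (orderOf b : ℝ)) / (Fintype.card A * Fintype.card B) := by
        rw [Fintype.sum_congr _ _ key, Fintype.sum_prod_type, Fintype.card_prod]; push_cast; ring_nf
    _ = _ := by
        rw [← Finset.sum_mul_sum]
        rw [div_mul_div_comm]

end Basic


section Cyclic

variable {G : Type*} [Group G] [Finite G]

lemma sum_orderOf_zpowers (g : G) :
    ∑ᶠ x : (Subgroup.zpowers g), (orderOf x : ℝ)
      = ∑ i ∈ Finset.range (orderOf g), ((orderOf g / Nat.gcd (orderOf g) i : ℕ) : ℝ) := by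
  have hfin : IsOfFinOrder g := isOfFinOrder_of_finite g
  have : Fintype (Subgroup.zpowers g) := Fintype.ofFinite _
  rw [finsum_eq_sum_of_fintype, ← Fin.sum_univ_eq_sum_range]
  refine Fintype.sum_equiv (finEquivZPowers (x := g) hfin).symm
    (fun x => (orderOf x : ℝ))
    (fun i => ((orderOf g / Nat.gcd (orderOf g) i : ℕ) : ℝ)) fun x => ?_
  obtain ⟨i, rfl⟩ := (finEquivZPowers (x := g) hfin).surjective x
  rw [Equiv.symm_apply_apply]
  have h1 : ((finEquivZPowers (x := g) hfin i : G)) = g ^ (i : ℕ) := by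
    rfl
  show (orderOf ((finEquivZPowers (x := g) hfin) i) : ℝ) = _
  have h2 : orderOf ((finEquivZPowers (x := g) hfin) i) = orderOf ((finEquivZPowers (x := g) hfin i : G)) :=
    (orderOf_injective (Subgroup.zpowers g).subtype Subtype.coe_injective _).symm
  rw [h2, h1, orderOf_pow]

lemma avgOrder_zpowers (g : G) :
    avgOrder (Subgroup.zpowers g)
      = (∑ i ∈ Finset.range (orderOf g), ((orderOf g / Nat.gcd (orderOf g) i : ℕ) : ℝ)) / (orderOf g) := by
  rw [avgOrder, sum_orderOf_zpowers, Nat.card_zpowers]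

end Cyclic

lemma filter_dvd_range_card (p m : ℕ) (hp : 0 < p) :
    ((Finset.range (p * m)).filter (fun i => p ∣ i)).card = m := by
  classical
  have : (Finset.range (p * m)).filter (fun i => p ∣ i) = (Finset.range m).image (fun j => p * j) := by
    ext i
    simp only [Finset.mem_filter, Finset.mem_range, Finset.mem_image]
    constructor
    · rintro ⟨hi, j, rfl⟩
      exact ⟨j, by exact (Nat.mul_lt_mul_left hp).1 hi, rfl⟩
    · rintro ⟨j, hj, rfl⟩
      exact ⟨(Nat.mul_lt_mul_left hp).2 hj, ⟨j, rfl⟩⟩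
  rw [this, Finset.card_image_of_injective _ (fun a b h => Nat.eq_of_mul_eq_mul_left hp h), Finset.card_range]

-- arithmetic: the gcd-sum for p^2
lemma sum_gcd_prime_sq (p : ℕ) (hp : p.Prime) :
    ∑ i ∈ Finset.range (p^2), ((p^2 / Nat.gcd (p^2) i : ℕ) : ℝ)
      = 1 + ((p:ℝ) - 1) * p + ((p:ℝ)^2 - p) * p^2 := by
  classical
  have hp0 : 0 < p := hp.pos
  have hterm : ∀ i ∈ Finset.range (p^2),
      ((p^2 / Nat.gcd (p^2) i : ℕ) : ℝ)
        = if i = 0 then 1 else if p ∣ i then (p:ℝ) else (p:ℝ)^2 := by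
    intro i hi
    rw [Finset.mem_range] at hi
    by_cases h0 : i = 0
    · simp [h0, Nat.div_self (by positivity : 0 < p^2)]
    by_cases hdvd : p ∣ i
    · have hgcd : Nat.gcd (p^2) i = p := by
        have h1 : Nat.gcd (p^2) i ∣ p^2 := Nat.gcd_dvd_left _ _
        rcases (Nat.dvd_prime_pow hp).1 h1 with ⟨k, hk2, hke⟩
        have hpd : p ∣ Nat.gcd (p^2) i := Nat.dvd_gcd (dvd_pow_self p two_ne_zero) hdvd
        have hk1 : k ≠ 0 := by
          rintro rfl
          rw [hke, pow_zero] at hpd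
          exact hp.one_lt.ne' (Nat.eq_one_of_dvd_one hpd ▸ rfl)
        have hk2' : k ≠ 2 := by
          rintro rfl
          have h2 : p^2 ∣ i := hke ▸ Nat.gcd_dvd_right _ _
          exact h0 (Nat.eq_zero_of_dvd_of_lt h2 hi)
        have : k = 1 := by omega
        rw [this, pow_one] at hke
        exact hke
      have hq : p^2 / p = p := by rw [pow_two, Nat.mul_div_cancel_left _ hp0]
      rw [hgcd, hq]
      simp [h0, hdvd]
    · have hgcd : Nat.gcd (p^2) i = 1 :=
        Nat.Coprime.gcd_eq_one (Nat.Coprime.pow_left _ ((hp.coprime_iff_not_dvd).2 hdvd))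
      rw [hgcd, Nat.div_one]
      simp [h0, hdvd]
  rw [Finset.sum_congr rfl hterm]
  rw [Finset.sum_ite]
  rw [Finset.sum_ite]
  have hc0 : (Finset.range (p^2)).filter (fun i => i = 0) = {0} := by
    ext i; simp only [Finset.mem_filter, Finset.mem_range, Finset.mem_singleton]
    constructor
    · rintro ⟨_, rfl⟩; rfl
    · rintro rfl; exact ⟨by positivity, rfl⟩
  have hcd : (((Finset.range (p^2)).filter (fun i => ¬ i = 0)).filter (fun i => p ∣ i)).card = p - 1 := by
    have : ((Finset.range (p^2)).filter (fun i => ¬ i = 0)).filter (fun i => p ∣ i)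
        = ((Finset.range (p^2)).filter (fun i => p ∣ i)).erase 0 := by
      ext i
      simp only [Finset.mem_filter, Finset.mem_erase, Finset.mem_range]
      tauto
    rw [this, Finset.card_erase_of_mem (by simp [Finset.mem_filter]; positivity)]
    have := filter_dvd_range_card p p hp0
    rw [← pow_two] at this
    rw [this]
  have hcnd : (((Finset.range (p^2)).filter (fun i => ¬ i = 0)).filter (fun i => ¬ p ∣ i)).card = p^2 - p := by
    have h1 : ((Finset.range (p^2)).filter (fun i => ¬ i = 0)).filter (fun i => ¬ p ∣ i)
        = (Finset.range (p^2)).filter (fun i => ¬ p ∣ i) := by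
      ext i
      simp only [Finset.mem_filter, Finset.mem_range]
      constructor
      · tauto
      · rintro ⟨h1, h2⟩
        refine ⟨⟨h1, ?_⟩, h2⟩
        rintro rfl; exact h2 ⟨0, rfl⟩
    rw [h1]
    have h2 := Finset.card_filter_add_card_filter_not (s := Finset.range (p^2)) (p := fun i => p ∣ i)
    have h3 := filter_dvd_range_card p p hp0
    rw [← pow_two] at h3
    rw [Finset.card_range] at h2
    omega
  rw [Finset.sum_const, Finset.sum_const, Finset.sum_const, hc0, hcd, hcnd]
  have hple : 1 ≤ p := hp0
  have hp2 : p ≤ p^2 := by nlinarith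
  simp only [Finset.card_singleton, nsmul_eq_mul]
  push_cast [Nat.cast_sub hple, Nat.cast_sub hp2]
  ring


lemma sum_range_cast {M : Type*} [AddCommMonoid M] (p : ℕ) [NeZero p] (f : ZMod p → M) :
    ∑ i ∈ Finset.range p, f (i : ZMod p) = ∑ y : ZMod p, f y := by
  refine Finset.sum_nbij' (fun i => (i : ZMod p)) (fun y => y.val) ?_ ?_ ?_ ?_ ?_ <;> intros <;>
    simp_all [ZMod.val_cast_of_lt, ZMod.val_lt, ZMod.natCast_val, ZMod.natCast_rightInverse _,
      Nat.mod_eq_of_lt]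

section Wreath

variable (p : ℕ) [hp : Fact p.Prime]

/-- shift automorphism of the base of the wreath product -/
def shiftA (c : ZMod p) : (ZMod p → ZMod p) ≃+ (ZMod p → ZMod p) where
  toFun v := fun x => v (x + c)
  invFun v := fun x => v (x - c)
  left_inv v := funext fun x => by show v (x - c + c) = v x; rw [sub_add_cancel]
  right_inv v := funext fun x => by show v (x + c - c) = v x; rw [add_sub_cancel_right]
  map_add' v w := rfl

def wphi : Multiplicative (ZMod p) →* MulAut (Multiplicative (ZMod p → ZMod p)) where
  toFun c := AddEquiv.toMultiplicative (shiftA p c.toAdd)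
  map_one' := by
    apply MulEquiv.ext
    intro v
    apply Multiplicative.toAdd.injective
    funext x
    show Multiplicative.toAdd v (x + 0) = Multiplicative.toAdd v x
    rw [add_zero]
  map_mul' c d := by
    apply MulEquiv.ext
    intro v
    apply Multiplicative.toAdd.injective
    funext x
    show Multiplicative.toAdd v (x + (Multiplicative.toAdd c + Multiplicative.toAdd d))
      = Multiplicative.toAdd v (x + Multiplicative.toAdd c + Multiplicative.toAdd d)
    rw [add_assoc]

abbrev Wgr := (Multiplicative (ZMod p → ZMod p)) ⋊[wphi p] (Multiplicative (ZMod p))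

def wEquiv : Wgr p ≃ (ZMod p → ZMod p) × ZMod p where
  toFun g := (g.left.toAdd, g.right.toAdd)
  invFun y := ⟨Multiplicative.ofAdd y.1, Multiplicative.ofAdd y.2⟩
  left_inv g := by cases g; rfl
  right_inv y := rfl

noncomputable instance : Fintype (Wgr p) := Fintype.ofEquiv _ (wEquiv p).symm

lemma Wcard : Nat.card (Wgr p) = p ^ (p + 1) := by
  rw [Nat.card_congr (wEquiv p), Nat.card_prod, Nat.card_eq_fintype_card,
    Nat.card_eq_fintype_card, Fintype.card_fun, ZMod.card, pow_succ]

lemma W_mk_mul (v w : ZMod p → ZMod p) (c d : ZMod p) :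
    (⟨Multiplicative.ofAdd v, Multiplicative.ofAdd c⟩ : Wgr p)
      * ⟨Multiplicative.ofAdd w, Multiplicative.ofAdd d⟩
      = ⟨Multiplicative.ofAdd (v + fun x => w (x + c)), Multiplicative.ofAdd (c + d)⟩ := rfl

lemma W_pow (v : ZMod p → ZMod p) (c : ZMod p) (n : ℕ) :
    (⟨Multiplicative.ofAdd v, Multiplicative.ofAdd c⟩ : Wgr p) ^ n
      = ⟨Multiplicative.ofAdd (fun x => ∑ i ∈ Finset.range n, v (x + i • c)),
         Multiplicative.ofAdd (n • c)⟩ := by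
  induction n with
  | zero =>
      rw [pow_zero, zero_nsmul]
      have h1 : (fun x => ∑ i ∈ Finset.range 0, v (x + i • c)) = (0 : ZMod p → ZMod p) := by
        funext x; simp
      rw [h1]
      rfl
  | succ n ih =>
      rw [pow_succ, ih, W_mk_mul]
      congr 1
      · apply congrArg
        funext x
        show (∑ i ∈ Finset.range n, v (x + i • c)) + v (x + n • c) = _
        rw [Finset.sum_range_succ]
      · apply congrArg
        rw [succ_nsmul]

lemma nsmul_p_zero (c : ZMod p) : p • c = 0 := by
  rw [nsmul_eq_mul, ZMod.natCast_self, zero_mul]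

/-- sum of the values of `v` -/
def sFun (v : ZMod p → ZMod p) : ZMod p := ∑ z : ZMod p, v z

lemma sum_range_smul (v : ZMod p → ZMod p) (c : ZMod p) (hc : c ≠ 0) (x : ZMod p) :
    ∑ i ∈ Finset.range p, v (x + i • c) = sFun p v := by
  have : NeZero p := ⟨hp.out.ne_zero⟩
  have h1 : ∀ i : ℕ, (i • c) = ((i : ZMod p) * c) := fun i => by rw [nsmul_eq_mul]
  calc ∑ i ∈ Finset.range p, v (x + i • c)
      = ∑ y : ZMod p, v (x + y * c) := by
        simp_rw [h1]
        exact sum_range_cast p (fun y => v (x + y * c))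
    _ = sFun p v := by
        rw [sFun, ← Equiv.sum_comp ((Equiv.mulRight₀ c hc).trans (Equiv.addLeft x)) v]
        rfl

lemma W_pow_p (v : ZMod p → ZMod p) (c : ZMod p) (hc : c ≠ 0) :
    (⟨Multiplicative.ofAdd v, Multiplicative.ofAdd c⟩ : Wgr p) ^ p
      = ⟨Multiplicative.ofAdd (fun _ => sFun p v), Multiplicative.ofAdd 0⟩ := by
  rw [W_pow, nsmul_p_zero]
  congr 1
  apply congrArg
  funext x
  exact sum_range_smul p v c hc x

lemma W_pow_p_base (v : ZMod p → ZMod p) :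
    (⟨Multiplicative.ofAdd v, Multiplicative.ofAdd 0⟩ : Wgr p) ^ p = 1 := by
  rw [W_pow, nsmul_p_zero]
  have h1 : (fun x => ∑ i ∈ Finset.range p, v (x + i • (0 : ZMod p))) = (0 : ZMod p → ZMod p) := by
    funext x
    simp only [smul_zero, add_zero]
    rw [Finset.sum_const, Finset.card_range]
    exact nsmul_p_zero p (v x)
  rw [h1]
  rfl

lemma W_mk_eq_one_iff (v : ZMod p → ZMod p) (c : ZMod p) :
    (⟨Multiplicative.ofAdd v, Multiplicative.ofAdd c⟩ : Wgr p) = 1 ↔ v = 0 ∧ c = 0 := by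
  constructor
  · intro h
    have h1 := congrArg SemidirectProduct.left h
    have h2 := congrArg SemidirectProduct.right h
    exact ⟨h1, h2⟩
  · rintro ⟨rfl, rfl⟩; rfl

lemma orderOf_W_base (v : ZMod p → ZMod p) (hv : v ≠ 0) :
    orderOf (⟨Multiplicative.ofAdd v, Multiplicative.ofAdd 0⟩ : Wgr p) = p := by
  refine orderOf_eq_prime (W_pow_p_base p v) ?_
  rw [Ne, W_mk_eq_one_iff]
  tauto

lemma orderOf_W_out_zero (v : ZMod p → ZMod p) (c : ZMod p) (hc : c ≠ 0) (hs : sFun p v = 0) :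
    orderOf (⟨Multiplicative.ofAdd v, Multiplicative.ofAdd c⟩ : Wgr p) = p := by
  refine orderOf_eq_prime ?_ ?_
  · rw [W_pow_p p v c hc, hs]
    rfl
  · rw [Ne, W_mk_eq_one_iff]
    tauto

lemma orderOf_W_out (v : ZMod p → ZMod p) (c : ZMod p) (hc : c ≠ 0) (hs : sFun p v ≠ 0) :
    orderOf (⟨Multiplicative.ofAdd v, Multiplicative.ofAdd c⟩ : Wgr p) = p ^ 2 := by
  have hpow2 : (⟨Multiplicative.ofAdd v, Multiplicative.ofAdd c⟩ : Wgr p) ^ (p ^ 2) = 1 := by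
    rw [pow_two, pow_mul, W_pow_p p v c hc, W_pow_p_base]
  have hpow1 : (⟨Multiplicative.ofAdd v, Multiplicative.ofAdd c⟩ : Wgr p) ^ p ≠ 1 := by
    rw [W_pow_p p v c hc, Ne, W_mk_eq_one_iff]
    rintro ⟨h1, -⟩
    exact hs (congrFun h1 0)
  have hdvd : orderOf (⟨Multiplicative.ofAdd v, Multiplicative.ofAdd c⟩ : Wgr p) ∣ p ^ 2 :=
    orderOf_dvd_of_pow_eq_one hpow2
  rcases (Nat.dvd_prime_pow hp.out).1 hdvd with ⟨k, hk, hke⟩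
  have hk01 : k ≠ 0 ∧ k ≠ 1 := by
    constructor <;> rintro rfl
    · rw [pow_zero] at hke
      rw [orderOf_eq_one_iff] at hke
      rw [hke] at hpow1
      exact hpow1 (one_pow p)
    · rw [pow_one] at hke
      apply hpow1
      have := pow_orderOf_eq_one (⟨Multiplicative.ofAdd v, Multiplicative.ofAdd c⟩ : Wgr p)
      rwa [hke] at this
  have : k = 2 := by omega
  rw [hke, this]

end Wreath


section K
variable (p : ℕ) [hp : Fact p.Prime]

def sHom : (ZMod p → ZMod p) →+ ZMod p :=
  AddMonoidHom.mk' (fun v => sFun p v) (by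
    intro v w
    simp [sFun, Finset.sum_add_distrib])

lemma sHom_surj : Function.Surjective (sHom p) := by
  intro t
  refine ⟨Pi.single 0 t, ?_⟩
  show sFun p (Pi.single 0 t) = t
  rw [sFun]
  simp

lemma card_ker_sHom : Nat.card (sHom p).ker = p ^ (p - 1) := by
  have : NeZero p := ⟨hp.out.ne_zero⟩
  have h1 : Nat.card (ZMod p → ZMod p)
      = Nat.card ((ZMod p → ZMod p) ⧸ (sHom p).ker) * Nat.card (sHom p).ker :=
    AddSubgroup.card_eq_card_quotient_mul_card_addSubgroup _
  have h2 : Nat.card ((ZMod p → ZMod p) ⧸ (sHom p).ker) = p := by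
    rw [Nat.card_congr (QuotientAddGroup.quotientKerEquivOfSurjective _ (sHom_surj p)).toEquiv]
    exact Nat.card_zmod p
  have h3 : Nat.card (ZMod p → ZMod p) = p ^ p := by
    rw [Nat.card_eq_fintype_card, Fintype.card_fun, ZMod.card]
  rw [h2, h3] at h1
  have hpos : 1 ≤ p := hp.out.pos
  have h4 : p * p ^ (p - 1) = p ^ p := by
    rw [← pow_succ']
    congr 1
    omega
  rw [← h4] at h1
  exact (Nat.eq_of_mul_eq_mul_left hp.out.pos h1.symm)

lemma card_sFun_zero :
    (Finset.univ.filter (fun v : ZMod p → ZMod p => sFun p v = 0)).card = p ^ (p - 1) := by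
  classical
  rw [← Fintype.card_subtype]
  rw [← card_ker_sHom p, Nat.card_eq_fintype_card]
  exact Fintype.card_congr (Equiv.subtypeEquivRight fun v => Iff.rfl).symm
end K

section SumW
variable (p : ℕ) [hp : Fact p.Prime]

noncomputable def Treal : ℝ :=
  1 + ((p:ℝ)^p - 1)*p
    + ((p:ℝ)-1)*((p:ℝ)^(p-1)*p + ((p:ℝ)^p - (p:ℝ)^(p-1))*(p:ℝ)^2)

lemma sum_orderOf_W : ∑ᶠ x : Wgr p, (orderOf x : ℝ) = Treal p := by
  classical
  have : NeZero p := ⟨hp.out.ne_zero⟩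
  rw [finsum_eq_sum_of_fintype]
  rw [← Equiv.sum_comp (wEquiv p).symm (fun x : Wgr p => (orderOf x : ℝ))]
  rw [Fintype.sum_prod_type_right]
  -- now : ∑ c : ZMod p, ∑ v, orderOf ((wEquiv p).symm (v, c))
  have hmk : ∀ (v : ZMod p → ZMod p) (c : ZMod p),
      (wEquiv p).symm (v, c) = (⟨Multiplicative.ofAdd v, Multiplicative.ofAdd c⟩ : Wgr p) := by
    intro v c; rfl
  have hcard_univ : (Finset.univ : Finset (ZMod p)).card = p := by
    rw [Finset.card_univ, ZMod.card]
  have hcardV : (Finset.univ : Finset (ZMod p → ZMod p)).card = p ^ p := by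
    rw [Finset.card_univ, Fintype.card_fun, ZMod.card]
  -- inner sum for c = 0
  have hzero : ∑ v : ZMod p → ZMod p,
      (orderOf ((wEquiv p).symm (v, (0 : ZMod p))) : ℝ) = 1 + ((p:ℝ)^p - 1)*p := by
    have hterm : ∀ v : ZMod p → ZMod p,
        (orderOf ((wEquiv p).symm (v, (0 : ZMod p))) : ℝ) = if v = 0 then 1 else (p:ℝ) := by
      intro v
      rw [hmk]
      by_cases hv : v = 0
      · subst hv
        have h1 : (⟨Multiplicative.ofAdd (0 : ZMod p → ZMod p), Multiplicative.ofAdd (0 : ZMod p)⟩ : Wgr p) = 1 := rfl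
        rw [if_pos rfl, h1, orderOf_one, Nat.cast_one]
      · rw [orderOf_W_base p v hv, if_neg hv]
    rw [Finset.sum_congr rfl (fun v _ => hterm v)]
    rw [Finset.sum_ite]
    have h0 : (Finset.univ : Finset (ZMod p → ZMod p)).filter (fun v => v = 0) = {0} := by
      ext v; simp
    have h1 : (((Finset.univ : Finset (ZMod p → ZMod p)).filter (fun v => ¬ v = 0))).card
        = p ^ p - 1 := by
      have := Finset.card_filter_add_card_filter_not
        (s := (Finset.univ : Finset (ZMod p → ZMod p))) (p := fun v => v = 0)
      rw [hcardV, h0] at this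
      simp only [Finset.card_singleton] at this
      omega
    rw [h0, Finset.sum_const, Finset.sum_const, h1]
    have hple : 1 ≤ p ^ p := Nat.one_le_pow _ _ hp.out.pos
    simp only [Finset.card_singleton, nsmul_eq_mul]
    push_cast [Nat.cast_sub hple]
    ring
  -- inner sum for c ≠ 0
  have hnz : ∀ c : ZMod p, c ≠ 0 → ∑ v : ZMod p → ZMod p,
      (orderOf ((wEquiv p).symm (v, c)) : ℝ)
        = (p:ℝ)^(p-1)*p + ((p:ℝ)^p - (p:ℝ)^(p-1))*(p:ℝ)^2 := by
    intro c hc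
    have hterm : ∀ v : ZMod p → ZMod p,
        (orderOf ((wEquiv p).symm (v, c)) : ℝ)
          = if sFun p v = 0 then (p:ℝ) else (p:ℝ)^2 := by
      intro v
      rw [hmk]
      by_cases hs : sFun p v = 0
      · rw [orderOf_W_out_zero p v c hc hs, if_pos hs]
      · rw [orderOf_W_out p v c hc hs, if_neg hs]
        push_cast
        ring
    rw [Finset.sum_congr rfl (fun v _ => hterm v)]
    rw [Finset.sum_ite]
    have h1 := card_sFun_zero p
    have h2 : (((Finset.univ : Finset (ZMod p → ZMod p)).filter (fun v => ¬ sFun p v = 0))).card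
        = p ^ p - p ^ (p-1) := by
      have := Finset.card_filter_add_card_filter_not
        (s := (Finset.univ : Finset (ZMod p → ZMod p))) (p := fun v => sFun p v = 0)
      rw [hcardV, h1] at this
      omega
    rw [Finset.sum_const, Finset.sum_const, h1, h2]
    have hle : p ^ (p-1) ≤ p ^ p := Nat.pow_le_pow_right hp.out.pos (by omega)
    simp only [nsmul_eq_mul]
    push_cast [Nat.cast_sub hle]
    ring
  -- assemble
  rw [← Finset.sum_erase_add (Finset.univ : Finset (ZMod p)) _ (Finset.mem_univ (0 : ZMod p))]
  rw [hzero]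
  have herase : ∑ c ∈ (Finset.univ : Finset (ZMod p)).erase 0,
      (∑ v : ZMod p → ZMod p, (orderOf ((wEquiv p).symm (v, c)) : ℝ))
        = ((p:ℝ)-1) * ((p:ℝ)^(p-1)*p + ((p:ℝ)^p - (p:ℝ)^(p-1))*(p:ℝ)^2) := by
    rw [Finset.sum_congr rfl (fun c hcmem => hnz c (Finset.ne_of_mem_erase hcmem))]
    rw [Finset.sum_const, Finset.card_erase_of_mem (Finset.mem_univ _), hcard_univ]
    have hp1 : 1 ≤ p := hp.out.pos
    simp only [nsmul_eq_mul]
    push_cast [Nat.cast_sub hp1]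
    ring
  rw [herase, Treal]
  ring

end SumW

section Rho
variable (p : ℕ) [hp : Fact p.Prime]

noncomputable def g0 : Wgr p := ⟨Multiplicative.ofAdd (Pi.single 0 1), Multiplicative.ofAdd 1⟩

lemma sFun_single : sFun p (Pi.single (0 : ZMod p) (1 : ZMod p)) = 1 := by
  rw [sFun]
  simp

lemma orderOf_g0 : orderOf (g0 p) = p ^ 2 := by
  have h1 : (1 : ZMod p) ≠ 0 := one_ne_zero
  refine orderOf_W_out p _ _ h1 ?_
  rw [sFun_single p]
  exact h1

lemma Wnilpotent : Group.IsNilpotent (Wgr p) :=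
  (IsPGroup.of_card (Wcard p)).isNilpotent

noncomputable def Sreal : ℝ := 1 + ((p:ℝ) - 1) * p + ((p:ℝ)^2 - p) * p^2

lemma avgOrder_W : avgOrder (Wgr p) = Treal p / (p:ℝ)^(p+1) := by
  rw [avgOrder, sum_orderOf_W, Wcard]
  push_cast
  ring

lemma avgOrder_H0 : avgOrder (Subgroup.zpowers (g0 p)) = Sreal p / (p:ℝ)^2 := by
  rw [avgOrder_zpowers, orderOf_g0, sum_gcd_prime_sq p hp.out, Sreal]
  push_cast
  ring

noncomputable def rho : ℝ := (Treal p / (p:ℝ)^(p+1)) / (Sreal p / (p:ℝ)^2)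

lemma ratio_W : avgOrder (Wgr p) / avgOrder (Subgroup.zpowers (g0 p)) = rho p := by
  rw [avgOrder_W, avgOrder_H0, rho]

end Rho

section RhoBounds
variable (p : ℕ)

lemma rho_bounds (hp5 : 5 ≤ p) :
    1 - 3/(p:ℝ) ≤ rho p ∧ rho p ≤ 1 - 1/(2*(p:ℝ)) := by
  have hP5 : (5:ℝ) ≤ (p:ℝ) := by exact_mod_cast hp5
  set P : ℝ := (p:ℝ) with hPdef
  have hP0 : 0 < P := by linarith
  have hRP : P^(p-1) * P = P^p := by
    rw [← pow_succ]
    congr 1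
    omega
  have hpp2 : P^(p+1) = P^(p-1) * P^2 := by
    rw [← pow_add]
    congr 1
    omega
  have hT : Treal p = P^(p-1) * P * (P^3 - 2*P^2 + 3*P - 1) + (1 - P) := by
    rw [Treal, ← hRP]
    ring
  have hS : Sreal p = P^4 - P^3 + P^2 - P + 1 := by
    rw [Sreal]; ring
  have hR0 : 0 < P^(p-1) := by positivity
  have hRge : P ≤ P^(p-1) := by
    calc P = P^1 := (pow_one P).symm
    _ ≤ P^(p-1) := pow_le_pow_right₀ (by linarith) (by omega)
  have hS0 : 0 < Sreal p := by
    rw [hS]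
    nlinarith [mul_nonneg hP0.le (mul_nonneg (mul_nonneg hP0.le hP0.le) (by linarith : (0:ℝ) ≤ P - 1)),
      mul_nonneg hP0.le (by linarith : (0:ℝ) ≤ P - 1)]
  have hrho : rho p = Treal p / (P^(p-1) * Sreal p) := by
    rw [rho, hpp2]
    rw [div_div_div_eq]
    rw [div_eq_div_iff (by positivity) (by positivity)]
    ring
  constructor
  · rw [hrho, le_div_iff₀ (by positivity)]
    have h1 : (0:ℝ) ≤ 2*P^4 - P^3 + 3*P^2 - 5*P + 3 := by nlinarith
    have h2 : P * (2*P^4 - P^3 + 3*P^2 - 5*P + 3) ≤ P^(p-1) * (2*P^4 - P^3 + 3*P^2 - 5*P + 3) :=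
      mul_le_mul_of_nonneg_right hRge h1
    rw [hT, hS]
    have h3 : (1 - 3/P) = (P - 3)/P := by field_simp
    rw [h3, div_mul_eq_mul_div, div_le_iff₀ hP0]
    nlinarith [h2]
  · rw [hrho, div_le_iff₀ (by positivity)]
    have h1 : (0:ℝ) ≤ P^4 - 3*P^3 - P^2 + 3*P - 1 := by nlinarith
    have h2 : (0:ℝ) ≤ P^(p-1) * (P^4 - 3*P^3 - P^2 + 3*P - 1) := mul_nonneg hR0.le h1
    rw [hT, hS]
    have h3 : (1 - 1/(2*P)) = (2*P - 1)/(2*P) := by field_simp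
    rw [h3, div_mul_eq_mul_div, ← sub_nonneg]
    have h4 : (2*P-1) * (P^(p-1) * (P^4 - P^3 + P^2 - P + 1)) / (2*P)
        - (P^(p-1) * P * (P^3 - 2*P^2 + 3*P - 1) + (1 - P))
        = (P^(p-1) * (P^4 - 3*P^3 - P^2 + 3*P - 1) + (2*P^2 - 2*P)) / (2*P) := by
      field_simp
      ring
    rw [h4]
    apply div_nonneg _ (by positivity)
    nlinarith [h2]
end RhoBounds

section Realize

lemma realize (S : Finset ℕ) (hS : ∀ q ∈ S, Nat.Prime q) :
    ∃ (G : Type) (_ : Group G) (_ : Finite G), Group.IsNilpotent G ∧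
      (Nat.card G = ∏ q ∈ S, q ^ (q + 1)) ∧
      ∃ H : Subgroup G,
        avgOrder G / avgOrder H = ∏ q ∈ S, (Treal q / (q:ℝ)^(q+1)) / (Sreal q / (q:ℝ)^2) := by
  classical
  induction S using Finset.induction_on with
  | empty =>
      refine ⟨PUnit, inferInstance, inferInstance, inferInstance, by simp, ⊤, ?_⟩
      have h1 : avgOrder PUnit = 1 := avgOrder_of_subsingleton
      have h2 : avgOrder (⊤ : Subgroup PUnit) = 1 := avgOrder_of_subsingleton
      rw [h1, h2]
      simp
  | @insert q S hqS ih =>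
      obtain ⟨G', iG', iF', hnil', hcard', H', hratio'⟩ := ih (fun r hr => hS r (Finset.mem_insert_of_mem hr))
      have hq : Fact (Nat.Prime q) := ⟨hS q (Finset.mem_insert_self q S)⟩
      refine ⟨Wgr q × G', inferInstance, inferInstance, ?_, ?_, ?_⟩
      · have := Wnilpotent q
        exact isNilpotent_prod
      · rw [Nat.card_prod, Wcard, hcard', Finset.prod_insert hqS]
      · -- subgroup
        refine ⟨(Subgroup.zpowers (g0 q)).prod H', ?_⟩
        have hcop : Nat.Coprime (Nat.card (Wgr q)) (Nat.card G') := by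
          rw [Wcard, hcard']
          refine Nat.Coprime.pow_left _ (Nat.Coprime.prod_right fun r hr => ?_)
          refine Nat.Coprime.pow_right _ ?_
          exact (Nat.coprime_primes (hS q (Finset.mem_insert_self q S)) (hS r (Finset.mem_insert_of_mem hr))).2
            (by rintro rfl; exact hqS hr)
        have hcopH : Nat.Coprime (Nat.card (Subgroup.zpowers (g0 q))) (Nat.card H') := by
          refine Nat.Coprime.coprime_dvd_left (Subgroup.card_subgroup_dvd_card _) ?_
          exact Nat.Coprime.coprime_dvd_right (Subgroup.card_subgroup_dvd_card _) hcop
        have e := Subgroup.prodEquiv (Subgroup.zpowers (g0 q)) H'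
        have hH : avgOrder ((Subgroup.zpowers (g0 q)).prod H')
            = avgOrder (Subgroup.zpowers (g0 q)) * avgOrder H' := by
          rw [avgOrder_congr e, avgOrder_prod hcopH]
        have hG : avgOrder (Wgr q × G') = avgOrder (Wgr q) * avgOrder G' := avgOrder_prod hcop
        rw [hG, hH, Finset.prod_insert hqS, ← hratio', avgOrder_W q, avgOrder_H0 q,
          div_mul_div_comm]

end Realize

section Analytic


lemma one_add_sum_le_prod (s : Finset ℕ) (x : ℕ → ℝ) (h : ∀ i ∈ s, 0 ≤ x i) :
    1 + ∑ i ∈ s, x i ≤ ∏ i ∈ s, (1 + x i) := by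
  classical
  induction s using Finset.induction_on with
  | empty => simp
  | @insert a s ha ih =>
      rw [Finset.sum_insert ha, Finset.prod_insert ha]
      have hxa : 0 ≤ x a := h a (Finset.mem_insert_self a s)
      have hsum : 0 ≤ ∑ i ∈ s, x i := Finset.sum_nonneg fun i hi => h i (Finset.mem_insert_of_mem hi)
      have ih' := ih (fun i hi => h i (Finset.mem_insert_of_mem hi))
      calc 1 + (x a + ∑ i ∈ s, x i) ≤ (1 + x a) * (1 + ∑ i ∈ s, x i) := by nlinarith
      _ ≤ (1 + x a) * ∏ i ∈ s, (1 + x i) := by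
          apply mul_le_mul_of_nonneg_left ih' (by linarith)

lemma prod_one_sub_le_inv_one_add_sum (s : Finset ℕ) (x : ℕ → ℝ)
    (h0 : ∀ i ∈ s, 0 ≤ x i) (h1 : ∀ i ∈ s, x i ≤ 1) :
    ∏ i ∈ s, (1 - x i) ≤ 1 / (1 + ∑ i ∈ s, x i) := by
  have hsum : 0 ≤ ∑ i ∈ s, x i := Finset.sum_nonneg h0
  have hprod_pos : (0:ℝ) < ∏ i ∈ s, (1 + x i) :=
    Finset.prod_pos fun i hi => by have := h0 i hi; linarith
  have key : (∏ i ∈ s, (1 - x i)) * (∏ i ∈ s, (1 + x i)) ≤ 1 := by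
    rw [← Finset.prod_mul_distrib]
    calc ∏ i ∈ s, (1 - x i) * (1 + x i) ≤ ∏ i ∈ s, 1 := by
          apply Finset.prod_le_prod
          · intro i hi
            have := h0 i hi; have := h1 i hi; nlinarith
          · intro i hi
            have := h0 i hi; have := h1 i hi; nlinarith
    _ = 1 := Finset.prod_const_one
  have h2 : (1:ℝ) + ∑ i ∈ s, x i ≤ ∏ i ∈ s, (1 + x i) := one_add_sum_le_prod s x h0
  have h3 : (0:ℝ) < 1 + ∑ i ∈ s, x i := by linarith
  calc ∏ i ∈ s, (1 - x i) ≤ 1 / ∏ i ∈ s, (1 + x i) := (le_div_iff₀ hprod_pos).2 key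
  _ ≤ 1 / (1 + ∑ i ∈ s, x i) := one_div_le_one_div_of_le h3 h2

end Analytic

section Greedy

def Pset (p₀ N : ℕ) : Finset ℕ := (Finset.range N).filter (fun q => Nat.Prime q ∧ p₀ ≤ q)

lemma Pset_primes (p₀ N : ℕ) : ∀ q ∈ Pset p₀ N, Nat.Prime q ∧ p₀ ≤ q := by
  intro q hq
  exact (Finset.mem_filter.1 hq).2

lemma prime_sum_unbounded (p₀ : ℕ) (M : ℝ) : ∃ N, M ≤ ∑ q ∈ Pset p₀ N, (1:ℝ)/q := by
  classical
  set f : ℕ → ℝ := {p | Nat.Prime p}.indicator (fun n : ℕ => 1 / (n:ℝ)) with hf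
  have hf0 : ∀ n, 0 ≤ f n := by
    intro n
    apply Set.indicator_nonneg
    intro n _
    positivity
  have htend := (not_summable_iff_tendsto_nat_atTop_of_nonneg hf0).1 not_summable_one_div_on_primes
  obtain ⟨N, hN⟩ := (htend.eventually_ge_atTop (M + p₀)).exists
  refine ⟨N, ?_⟩
  have hsplit : ∑ i ∈ Finset.range N, f i = ∑ q ∈ (Finset.range N).filter Nat.Prime, (1:ℝ)/q := by
    rw [Finset.sum_indicator_eq_sum_filter]
    simp only [Set.mem_setOf_eq]
  have hsplit2 : ∑ q ∈ (Finset.range N).filter Nat.Prime, (1:ℝ)/q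
      = ∑ q ∈ Pset p₀ N, (1:ℝ)/q
        + ∑ q ∈ ((Finset.range N).filter Nat.Prime).filter (fun q => ¬ p₀ ≤ q), (1:ℝ)/q := by
    rw [← Finset.sum_filter_add_sum_filter_not ((Finset.range N).filter Nat.Prime) (fun q => p₀ ≤ q)]
    congr 1
    rw [Pset, Finset.filter_filter]
  have hsmall : ∑ q ∈ ((Finset.range N).filter Nat.Prime).filter (fun q => ¬ p₀ ≤ q), (1:ℝ)/q
      ≤ p₀ := by
    have hsub : ((Finset.range N).filter Nat.Prime).filter (fun q => ¬ p₀ ≤ q) ⊆ Finset.range p₀ := by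
      intro q hq
      simp only [Finset.mem_filter, Finset.mem_range, not_le] at hq ⊢
      exact hq.2
    calc ∑ q ∈ ((Finset.range N).filter Nat.Prime).filter (fun q => ¬ p₀ ≤ q), (1:ℝ)/q
        ≤ ∑ _q ∈ ((Finset.range N).filter Nat.Prime).filter (fun q => ¬ p₀ ≤ q), (1:ℝ) := by
          apply Finset.sum_le_sum
          intro q hq
          have hq2 : Nat.Prime q := ((Finset.mem_filter.1 hq).1 |> Finset.mem_filter.1).2
          rw [div_le_one (by exact_mod_cast hq2.pos)]
          exact_mod_cast hq2.one_lt.le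
      _ = (((Finset.range N).filter Nat.Prime).filter (fun q => ¬ p₀ ≤ q)).card := by
          rw [Finset.sum_const, nsmul_eq_mul, mul_one]
      _ ≤ (Finset.range p₀).card := by exact_mod_cast Finset.card_le_card hsub
      _ = p₀ := by rw [Finset.card_range]
  rw [hsplit, hsplit2] at hN
  linarith

lemma exists_prod_rho_lt (p₀ : ℕ) (h5 : 5 ≤ p₀) (c : ℝ) (hc : 0 < c) :
    ∃ N, ∏ q ∈ Pset p₀ N, rho q < c := by
  obtain ⟨N, hN⟩ := prime_sum_unbounded p₀ (2/c)
  refine ⟨N, ?_⟩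
  have hq5 : ∀ q ∈ Pset p₀ N, Nat.Prime q ∧ 5 ≤ q := by
    intro q hq
    obtain ⟨h1, h2⟩ := Pset_primes p₀ N q hq
    exact ⟨h1, le_trans h5 h2⟩
  have hstep1 : ∏ q ∈ Pset p₀ N, rho q ≤ ∏ q ∈ Pset p₀ N, (1 - 1/(2*(q:ℝ))) := by
    apply Finset.prod_le_prod
    · intro q hq
      haveI : Fact (Nat.Prime q) := ⟨(hq5 q hq).1⟩
      have hb := (rho_bounds q (hq5 q hq).2).1
      have hq5' : (5:ℝ) ≤ (q:ℝ) := by exact_mod_cast (hq5 q hq).2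
      have : 3/(q:ℝ) ≤ 3/5 := by
        apply div_le_div_of_nonneg_left (by norm_num) (by norm_num) hq5'
      linarith
    · intro q hq
      haveI : Fact (Nat.Prime q) := ⟨(hq5 q hq).1⟩
      exact (rho_bounds q (hq5 q hq).2).2
  have hstep2 : ∏ q ∈ Pset p₀ N, (1 - 1/(2*(q:ℝ)))
      ≤ 1 / (1 + ∑ q ∈ Pset p₀ N, 1/(2*(q:ℝ))) := by
    apply prod_one_sub_le_inv_one_add_sum
    · intro q hq
      have : (0:ℝ) < q := by exact_mod_cast (hq5 q hq).1.pos
      positivity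
    · intro q hq
      have hq5' : (5:ℝ) ≤ (q:ℝ) := by exact_mod_cast (hq5 q hq).2
      rw [div_le_one (by linarith)]
      linarith
  have hsum : 2/c ≤ 2 * ∑ q ∈ Pset p₀ N, 1/(2*(q:ℝ)) := by
    calc 2/c ≤ ∑ q ∈ Pset p₀ N, (1:ℝ)/q := hN
    _ = 2 * ∑ q ∈ Pset p₀ N, 1/(2*(q:ℝ)) := by
        rw [Finset.mul_sum]
        apply Finset.sum_congr rfl
        intro q hq
        have : (0:ℝ) < q := by exact_mod_cast (hq5 q hq).1.pos
        field_simp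
  have hsum0 : 0 ≤ ∑ q ∈ Pset p₀ N, 1/(2*(q:ℝ)) := by
    apply Finset.sum_nonneg
    intro q hq
    have : (0:ℝ) < q := by exact_mod_cast (hq5 q hq).1.pos
    positivity
  have hlast : 1 / (1 + ∑ q ∈ Pset p₀ N, 1/(2*(q:ℝ))) < c := by
    rw [div_lt_iff₀ (by linarith)]
    have e : 2/c = 2*(1/c) := by ring
    have h1c : 1/c ≤ ∑ q ∈ Pset p₀ N, 1/(2*(q:ℝ)) := by linarith
    have h2 : c * (1/c) ≤ c * ∑ q ∈ Pset p₀ N, 1/(2*(q:ℝ)) := mul_le_mul_of_nonneg_left h1c hc.le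
    have h3 : c * (1/c) = 1 := by field_simp
    nlinarith
  linarith

lemma greedy (t δ : ℝ) (ht0 : 0 < t) (ht1 : t < 1) (hδ : 0 < δ) :
    ∃ S : Finset ℕ, (∀ q ∈ S, Nat.Prime q) ∧ t ≤ ∏ q ∈ S, rho q ∧ ∏ q ∈ S, rho q ≤ t + δ := by
  classical
  by_contra hcon
  push_neg at hcon
  set p₀ : ℕ := max 5 (⌈3*(t+δ)/δ⌉₊ + 1) with hp₀
  have h5 : 5 ≤ p₀ := le_max_left _ _
  have hp₀R : 3*(t+δ)/δ ≤ (p₀:ℝ) := by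
    calc 3*(t+δ)/δ ≤ (⌈3*(t+δ)/δ⌉₊ : ℝ) := Nat.le_ceil _
    _ ≤ ((⌈3*(t+δ)/δ⌉₊ + 1 : ℕ) : ℝ) := by push_cast; linarith
    _ ≤ (p₀:ℝ) := by exact_mod_cast Nat.cast_le.2 (le_max_right _ _)
  have hkey : ∀ N, t ≤ ∏ q ∈ Pset p₀ N, rho q := by
    intro N
    induction N with
    | zero =>
        rw [show Pset p₀ 0 = ∅ from rfl, Finset.prod_empty]
        linarith
    | succ N ih =>
        have hrange : Pset p₀ (N+1)
            = if Nat.Prime N ∧ p₀ ≤ N then insert N (Pset p₀ N) else Pset p₀ N := by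
          rw [Pset, Finset.range_add_one, Finset.filter_insert]
          rfl
        by_cases hN : Nat.Prime N ∧ p₀ ≤ N
        · rw [hrange, if_pos hN]
          have hNmem : N ∉ Pset p₀ N := by
            intro hmem
            exact absurd (Finset.mem_range.1 (Finset.mem_filter.1 hmem).1) (lt_irrefl N)
          rw [Finset.prod_insert hNmem]
          have hstrict : t + δ < ∏ q ∈ Pset p₀ N, rho q :=
            hcon (Pset p₀ N) (fun q hq => (Pset_primes p₀ N q hq).1) ih
          haveI : Fact (Nat.Prime N) := ⟨hN.1⟩
          have h5N : 5 ≤ N := le_trans h5 hN.2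
          have hrb := rho_bounds N h5N
          have hNR : (5:ℝ) ≤ (N:ℝ) := by exact_mod_cast h5N
          have hrho_nonneg : (0:ℝ) ≤ 1 - 3/(N:ℝ) := by
            rw [sub_nonneg, div_le_one (by linarith)]
            linarith
          have hp₀N : 3*(t+δ)/δ ≤ (N:ℝ) := le_trans hp₀R (by exact_mod_cast hN.2)
          have hstep : t ≤ (1 - 3/(N:ℝ)) * (t + δ) := by
            have hN0 : (0:ℝ) < N := by linarith
            have h3 : 3*(t+δ) ≤ (N:ℝ)*δ := by
              rw [div_le_iff₀ hδ] at hp₀N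
              linarith
            have : 3/(N:ℝ)*(t+δ) ≤ δ := by
              rw [div_mul_eq_mul_div, div_le_iff₀ hN0]
              calc 3*(t+δ) ≤ (N:ℝ)*δ := h3
              _ = δ * N := by ring
            calc t = (t + δ) - δ := by ring
            _ ≤ (t + δ) - 3/(N:ℝ)*(t+δ) := by linarith
            _ = (1 - 3/(N:ℝ)) * (t + δ) := by ring
          calc t ≤ (1 - 3/(N:ℝ)) * (t + δ) := hstep
          _ ≤ rho N * ∏ q ∈ Pset p₀ N, rho q := by
              apply mul_le_mul hrb.1 hstrict.le (by linarith) (by linarith [hrb.1])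
        · rw [hrange, if_neg hN]
          exact ih
  obtain ⟨N, hNlt⟩ := exists_prod_rho_lt p₀ h5 t ht0
  exact absurd (hkey N) (not_le.2 hNlt)

end Greedy

open Filter Topology

/-- Every `a ∈ [0, 1)` is an adherent point of the set of ratios `o(G)/o(H)`
with `G` finite nilpotent and `H ≤ G`. -/
theorem avgOrder_ratio_nilpotent_adherent_lt_one :
    ∀ a : ℝ, 0 ≤ a → a < 1 → ∀ ε : ℝ, 0 < ε →
      ∃ (G : Type) (_ : Group G), Finite G ∧ Group.IsNilpotent G ∧
        ∃ H : Subgroup G, |avgOrder G / avgOrder H - a| < ε := by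
  intro a ha0 ha1 ε hε
  set m : ℝ := min (ε/4) (1/2) with hm
  have hm0 : 0 < m := lt_min (by linarith) (by norm_num)
  have hm4 : m ≤ ε/4 := min_le_left _ _
  set t : ℝ := max a m with ht
  have ht0 : 0 < t := lt_of_lt_of_le hm0 (le_max_right _ _)
  have ht1 : t < 1 := max_lt ha1 (lt_of_le_of_lt (min_le_right _ _) (by norm_num))
  have hta1 : t - a ≤ ε/4 := by
    rcases max_cases a m with ⟨h1, h2⟩ | ⟨h1, h2⟩ <;> rw [ht, h1] <;> linarith
  have hta0 : 0 ≤ t - a := by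
    have := le_max_left a m
    rw [ht]
    linarith
  obtain ⟨S, hSp, h1, h2⟩ := greedy t (ε/4) ht0 ht1 (by linarith)
  obtain ⟨G, iG, iF, hnil, -, H, hratio⟩ := realize S hSp
  refine ⟨G, iG, iF, hnil, H, ?_⟩
  have hval : avgOrder G / avgOrder H = ∏ q ∈ S, rho q := by
    rw [hratio]
    exact Finset.prod_congr rfl (fun q _ => rfl)
  rw [hval, abs_lt]
  constructor <;> linarith
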